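/- Let m_1,...,m_n be positive integers, t a nonnegative integer, and let B = {(a_{11},...,a_{1m_1},...,a_{n1},...,a_{nm_n}) ∈ Z_{≥0}^{m_1+...+m_n} : for each i, the sum a_{i1}+...+a_{im_i} equals some fixed q_i with 0 ≤ a_{ij} ≤ 2}, where q_1+...+q_n = t and each q_i satisfies 0 ≤ q_i ≤ 2m_i. Then B satisfies the exchange property: for any a, b ∈ B and any pair (i,j) with a_{ij} > b_{ij}, there exists l ∈ {1,...,m_i} with a_{il} < b_{il} such that a − e_{ij} + e_{il} ∈ B, where e_{ij} denotes the standard basis vector in the coordinate (i,j). -/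
import Mathlib


open Finset

/-- Index set: pairs (i,j) with 1 ≤ i ≤ n, 1 ≤ j ≤ m i. -/
abbrev Idx (n : ℕ) (m : Fin n → ℕ) := (i : Fin n) × Fin (m i)

/-- The vector a − e_{ij} + e_{il}. -/
def exchStep {n : ℕ} {m : Fin n → ℕ} (a : Idx n m → ℕ) (i : Fin n) (j l : Fin (m i)) :
    Idx n m → ℕ :=
  fun p => if p = ⟨i, j⟩ then a p - 1 else if p = ⟨i, l⟩ then a p + 1 else a p

/-- The generalized bi-exchange property. -/
def BiExchange {n : ℕ} {m : Fin n → ℕ} (B : Set (Idx n m → ℕ)) : Prop :=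
  ∀ a ∈ B, ∀ b ∈ B, ∀ (i : Fin n) (j : Fin (m i)),
    b ⟨i, j⟩ < a ⟨i, j⟩ →
      ∃ l : Fin (m i), a ⟨i, l⟩ < b ⟨i, l⟩ ∧ exchStep a i j l ∈ B

/-- the Veronese-type set B (block sums q i, entries ≤ 2) satisfies the
generalized bi-exchange property. -/
theorem stmt0 {n : ℕ} (m : Fin n → ℕ) (hm : ∀ i, 1 ≤ m i) (t : ℕ) (q : Fin n → ℕ)
    (hq : ∑ i, q i = t) (hqle : ∀ i, q i ≤ 2 * m i) :
    BiExchange {a : Idx n m → ℕ |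
      ∀ i : Fin n, (∑ j : Fin (m i), a ⟨i, j⟩) = q i ∧ ∀ j : Fin (m i), a ⟨i, j⟩ ≤ 2} := by
  intro a ha b hb i j hij
  -- find l with a⟨i,l⟩ < b⟨i,l⟩
  have hsa := (ha i).1
  have hsb := (hb i).1
  have hex : ∃ l : Fin (m i), a ⟨i, l⟩ < b ⟨i, l⟩ := by
    by_contra h
    push_neg at h
    have : (∑ j' : Fin (m i), b ⟨i, j'⟩) < ∑ j' : Fin (m i), a ⟨i, j'⟩ :=
      Finset.sum_lt_sum (fun l _ => h l) ⟨j, Finset.mem_univ j, hij⟩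
    omega
  obtain ⟨l, hl⟩ := hex
  have hjl : j ≠ l := by
    intro h; subst h; omega
  refine ⟨l, hl, ?_⟩
  intro i'
  by_cases hii : i = i'
  · subst hii
    constructor
    · have hfun : (fun j' : Fin (m i) => exchStep a i j l ⟨i, j'⟩) =
          Function.update (Function.update (fun j' : Fin (m i) => a ⟨i, j'⟩)
            j (a ⟨i, j⟩ - 1)) l (a ⟨i, l⟩ + 1) := by
        funext j'
        by_cases h1 : j' = j
        · subst h1
          simp [exchStep, Function.update, hjl, Ne.symm hjl]
        · by_cases h2 : j' = l
          · subst h2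
            have : (⟨i, j'⟩ : Idx n m) ≠ ⟨i, j⟩ := by
              intro h; exact h1 (by simpa using h)
            simp [exchStep, this, Function.update]
          · have e1 : (⟨i, j'⟩ : Idx n m) ≠ ⟨i, j⟩ := by
              intro h; exact h1 (by simpa using h)
            have e2 : (⟨i, j'⟩ : Idx n m) ≠ ⟨i, l⟩ := by
              intro h; exact h2 (by simpa using h)
            simp [exchStep, e1, e2, Function.update, h1, h2]
      rw [hfun, Finset.sum_update_of_mem (Finset.mem_univ l),
        Finset.sum_update_of_mem (by simp [hjl] : j ∈ Finset.univ \ {l})]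
      simp only [Finset.sdiff_singleton_eq_erase]
      have hje : (Finset.univ.erase l).erase j = (Finset.univ.erase j).erase l := by
        rw [Finset.erase_right_comm]
      rw [hje]
      have := Finset.add_sum_erase _ (fun j' : Fin (m i) => a ⟨i, j'⟩) (Finset.mem_univ j)
      have h2 := Finset.add_sum_erase _ (fun j' : Fin (m i) => a ⟨i, j'⟩)
        (Finset.mem_erase.mpr ⟨Ne.symm hjl, Finset.mem_univ l⟩)
      have haj : 1 ≤ a ⟨i, j⟩ := by omega
      beta_reduce at this h2 ⊢
      omega
    · intro j'
      have hb2 := (hb i).2 l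
      by_cases h1 : j' = j
      · subst h1
        have hv : exchStep a i j' l ⟨i, j'⟩ = a ⟨i, j'⟩ - 1 := by simp [exchStep]
        rw [hv]
        have := (ha i).2 j'; omega
      · by_cases h2 : j' = l
        · subst h2
          have e1 : (⟨i, j'⟩ : Idx n m) ≠ ⟨i, j⟩ := by
            intro h; exact h1 (by simpa using h)
          have hv : exchStep a i j j' ⟨i, j'⟩ = a ⟨i, j'⟩ + 1 := by simp [exchStep, e1]
          rw [hv]
          omega
        · have e1 : (⟨i, j'⟩ : Idx n m) ≠ ⟨i, j⟩ := by
            intro h; exact h1 (by simpa using h)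
          have e2 : (⟨i, j'⟩ : Idx n m) ≠ ⟨i, l⟩ := by
            intro h; exact h2 (by simpa using h)
          simp only [exchStep, if_neg e1, if_neg e2]
          exact (ha i).2 j'
  · have hval : ∀ j' : Fin (m i'), exchStep a i j l ⟨i', j'⟩ = a ⟨i', j'⟩ := by
      intro j'
      have e1 : (⟨i', j'⟩ : Idx n m) ≠ ⟨i, j⟩ := by
        intro h; exact hii (congrArg Sigma.fst h).symm
      have e2 : (⟨i', j'⟩ : Idx n m) ≠ ⟨i, l⟩ := by
        intro h; exact hii (congrArg Sigma.fst h).symm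
      simp [exchStep, e1, e2]
    constructor
    · rw [Finset.sum_congr rfl (fun j' _ => hval j')]; exact (ha i').1
    · intro j'; rw [hval j']; exact (ha i').2 j'
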